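/- Let k be an algebraically closed field of characteristic p > 2, n = p^s·t with s ≥ 1 and p ∤ t, and μ ∈ k. Then every simple left H(0,μ)-module is one-dimensional over k. -/

import Mathlib

open FreeAlgebra in
/-- The defining relations of the Hopf algebra `H(λ,μ)` of Cibils–Lauve–Witherspoon, on the
free algebra on three generators `g = ι 0`, `a = ι 1`, `b = ι 2`:
`g^n = 1`, `ag = ga`, `bg = ga + gb`, `a^p = λ(1-g^p)`, `b^p = μ(1-g^p)`,
`ba = ab + (1/2)a²`. -/
inductive HRel (k : Type*) [Field k] (n p : ℕ) (lam mu : k) :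
    FreeAlgebra k (Fin 3) → FreeAlgebra k (Fin 3) → Prop
  | gn : HRel k n p lam mu (ι k (0 : Fin 3) ^ n) 1
  | ag : HRel k n p lam mu (ι k (1 : Fin 3) * ι k (0 : Fin 3)) (ι k (0 : Fin 3) * ι k (1 : Fin 3))
  | bg : HRel k n p lam mu (ι k (2 : Fin 3) * ι k (0 : Fin 3))
      (ι k (0 : Fin 3) * ι k (1 : Fin 3) + ι k (0 : Fin 3) * ι k (2 : Fin 3))
  | ap : HRel k n p lam mu (ι k (1 : Fin 3) ^ p)
      (algebraMap k (FreeAlgebra k (Fin 3)) lam * (1 - ι k (0 : Fin 3) ^ p))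
  | bp : HRel k n p lam mu (ι k (2 : Fin 3) ^ p)
      (algebraMap k (FreeAlgebra k (Fin 3)) mu * (1 - ι k (0 : Fin 3) ^ p))
  | ba : HRel k n p lam mu (ι k (2 : Fin 3) * ι k (1 : Fin 3))
      (ι k (1 : Fin 3) * ι k (2 : Fin 3)
        + algebraMap k (FreeAlgebra k (Fin 3)) (1 / 2) * ι k (1 : Fin 3) ^ 2)

/-- The algebra `H(λ,μ)`: the quotient of the free algebra on `g, a, b` by the two-sided
ideal generated by the relations `HRel`. -/
abbrev HAlg (k : Type*) [Field k] (n p : ℕ) (lam mu : k) := RingQuot (HRel k n p lam mu)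

/-- The image of the generator `g` in `H(λ,μ)`. -/
noncomputable def Hg (k : Type*) [Field k] (n p : ℕ) (lam mu : k) : HAlg k n p lam mu :=
  RingQuot.mkAlgHom k (HRel k n p lam mu) (FreeAlgebra.ι k (0 : Fin 3))

/-- The image of the generator `a` in `H(λ,μ)`. -/
noncomputable def Ha (k : Type*) [Field k] (n p : ℕ) (lam mu : k) : HAlg k n p lam mu :=
  RingQuot.mkAlgHom k (HRel k n p lam mu) (FreeAlgebra.ι k (1 : Fin 3))

/-- The image of the generator `b` in `H(λ,μ)`. -/
noncomputable def Hb (k : Type*) [Field k] (n p : ℕ) (lam mu : k) : HAlg k n p lam mu :=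
  RingQuot.mkAlgHom k (HRel k n p lam mu) (FreeAlgebra.ι k (2 : Fin 3))

section Aux

variable {k : Type*} [Field k] {n p : ℕ} {lam mu : k}
variable {M : Type} [AddCommGroup M] [Module k M]
  [Module (HAlg k n p lam mu) M] [IsScalarTower k (HAlg k n p lam mu) M]

/-- The representation of `H(λ,μ)` on a module `M`, as a `k`-algebra map to endomorphisms. -/
noncomputable def Hrep (k : Type*) [Field k] (n p : ℕ) (lam mu : k)
    (M : Type) [AddCommGroup M] [Module k M]
    [Module (HAlg k n p lam mu) M] [IsScalarTower k (HAlg k n p lam mu) M] :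
    HAlg k n p lam mu →ₐ[k] Module.End k M where
  toFun h :=
    { toFun := fun m => h • m
      map_add' := fun x y => smul_add h x y
      map_smul' := fun c m => by
        simp only [RingHom.id_apply]
        rw [← algebraMap_smul (HAlg k n p lam mu) c m, ← mul_smul,
          ← Algebra.commutes, mul_smul, algebraMap_smul] }
  map_one' := by ext m; exact one_smul _ m
  map_mul' x y := by ext m; exact mul_smul x y m
  map_zero' := by ext m; exact zero_smul _ m
  map_add' x y := by ext m; exact add_smul x y m
  commutes' c := by
    ext m
    show (algebraMap k (HAlg k n p lam mu) c) • m = _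
    rw [algebraMap_smul, Module.algebraMap_end_apply]

lemma Hrep_apply (h : HAlg k n p lam mu) (m : M) : Hrep k n p lam mu M h m = h • m := rfl

/-- Every element of `H(λ,μ)` lies in any subalgebra containing the three generators. -/
lemma Hmem_of_gen (S : Subalgebra k (HAlg k n p lam mu)) (h0 : Hg k n p lam mu ∈ S)
    (h1 : Ha k n p lam mu ∈ S) (h2 : Hb k n p lam mu ∈ S) (x : HAlg k n p lam mu) : x ∈ S := by
  obtain ⟨y, rfl⟩ := RingQuot.mkAlgHom_surjective k (HRel k n p lam mu) x
  refine FreeAlgebra.induction k (Fin 3)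
    (motive := fun y => RingQuot.mkAlgHom k (HRel k n p lam mu) y ∈ S)
    (fun r => by
      show RingQuot.mkAlgHom k (HRel k n p lam mu) (algebraMap k (FreeAlgebra k (Fin 3)) r) ∈ S
      rw [AlgHom.commutes]; exact S.algebraMap_mem r)
    (fun i => ?_)
    (fun a b ha hb => by
      show RingQuot.mkAlgHom k (HRel k n p lam mu) (a * b) ∈ S
      rw [map_mul]; exact S.mul_mem ha hb)
    (fun a b ha hb => by
      show RingQuot.mkAlgHom k (HRel k n p lam mu) (a + b) ∈ S
      rw [map_add]; exact S.add_mem ha hb) y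
  fin_cases i
  · exact h0
  · exact h1
  · exact h2

/-- A `k`-subspace stable under the action of the three generators is `⊥` or `⊤`. -/
lemma Hsub_dichotomy (hM : IsSimpleModule (HAlg k n p lam mu) M) (N : Submodule k M)
    (hg : ∀ m ∈ N, Hg k n p lam mu • m ∈ N)
    (ha : ∀ m ∈ N, Ha k n p lam mu • m ∈ N)
    (hb : ∀ m ∈ N, Hb k n p lam mu • m ∈ N) : N = ⊥ ∨ N = ⊤ := by
  let S : Subalgebra k (HAlg k n p lam mu) :=
    { carrier := {h | ∀ m ∈ N, h • m ∈ N}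
      mul_mem' := fun {x y} hx hy m hm => by rw [mul_smul]; exact hx _ (hy m hm)
      one_mem' := fun m hm => by rwa [one_smul]
      add_mem' := fun {x y} hx hy m hm => by rw [add_smul]; exact N.add_mem (hx m hm) (hy m hm)
      zero_mem' := fun m hm => by rw [zero_smul]; exact N.zero_mem
      algebraMap_mem' := fun c m hm => by rw [algebraMap_smul]; exact N.smul_mem c hm }
  have hall : ∀ (h : HAlg k n p lam mu), ∀ m ∈ N, h • m ∈ N :=
    fun h => Hmem_of_gen S hg ha hb h
  let N' : Submodule (HAlg k n p lam mu) M :=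
    { carrier := (N : Set M)
      add_mem' := fun hx hy => N.add_mem hx hy
      zero_mem' := N.zero_mem
      smul_mem' := fun h m hm => hall h m hm }
  have hmem : ∀ m, m ∈ N ↔ m ∈ N' := fun _ => Iff.rfl
  rcases hM.toIsSimpleOrder.2 N' with h | h
  · left; ext m; rw [hmem, h]; simp
  · right; ext m; rw [hmem, h]; simp

/-- If a product of `f - αᵢ • 1` kills a nonzero vector, `f` has an eigenvector. -/
lemma exists_eigenvector {K V : Type*} [Field K] [AddCommGroup V] [Module K V]
    (f : Module.End K V) :
    ∀ (l : List K) (v : V), v ≠ 0 → (l.map (fun α => f - α • 1)).prod v = 0 →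
      ∃ (α : K) (w : V), w ≠ 0 ∧ f w = α • w := by
  intro l
  induction l with
  | nil => intro v hv h; simp at h; exact absurd h hv
  | cons α l ih =>
    intro v hv h
    rw [List.map_cons, List.prod_cons] at h
    by_cases hu : (l.map (fun α => f - α • 1)).prod v = 0
    · exact ih v hv hu
    · refine ⟨α, _, hu, ?_⟩
      rw [Module.End.mul_apply] at h
      have h2 : f ((l.map (fun α => f - α • 1)).prod v)
          - α • ((l.map (fun α => f - α • 1)).prod v) = 0 := by
        simpa [LinearMap.sub_apply] using h
      exact sub_eq_zero.mp h2

end Aux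

open Polynomial in
/-- The main auxiliary result: for any `n > 0`, every simple `H(0,μ)`-module is
one-dimensional over `k`. -/
theorem stmt11_aux {k : Type*} [Field k] [IsAlgClosed k] (p : ℕ) [CharP k p] (hp : 2 < p)
    (n : ℕ) (hnpos : 0 < n) (mu : k)
    (M : Type) [AddCommGroup M] [Module k M]
    [Module (HAlg k n p 0 mu) M]
    [IsScalarTower k (HAlg k n p 0 mu) M]
    (hM : IsSimpleModule (HAlg k n p 0 mu) M) :
    Module.rank k M = 1 := by
  classical
  have hprime : p.Prime := by
    rcases CharP.char_is_prime_or_zero k p with h | h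
    · exact h
    · omega
  haveI : Fact p.Prime := ⟨hprime⟩
  have hppos : 0 < p := hprime.pos
  haveI : Nontrivial M := IsSimpleModule.nontrivial (HAlg k n p 0 mu) M
  -- the representation and the three operators
  set rep := Hrep k n p 0 mu M with hrep
  set G := rep (Hg k n p 0 mu) with hG
  set A := rep (Ha k n p 0 mu) with hA
  set B := rep (Hb k n p 0 mu) with hB
  -- relations in the algebra
  have rel_gn : (Hg k n p 0 mu) ^ n = 1 := by
    have h := RingQuot.mkAlgHom_rel k (HRel.gn (k := k) (n := n) (p := p) (lam := 0) (mu := mu))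
    rw [map_pow, map_one] at h
    exact h
  have rel_ag : Ha k n p 0 mu * Hg k n p 0 mu = Hg k n p 0 mu * Ha k n p 0 mu := by
    have h := RingQuot.mkAlgHom_rel k (HRel.ag (k := k) (n := n) (p := p) (lam := 0) (mu := mu))
    rw [map_mul, map_mul] at h
    exact h
  have rel_bg : Hb k n p 0 mu * Hg k n p 0 mu
      = Hg k n p 0 mu * Ha k n p 0 mu + Hg k n p 0 mu * Hb k n p 0 mu := by
    have h := RingQuot.mkAlgHom_rel k (HRel.bg (k := k) (n := n) (p := p) (lam := 0) (mu := mu))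
    rw [map_mul, map_add, map_mul, map_mul] at h
    exact h
  have rel_ap : (Ha k n p 0 mu) ^ p = 0 := by
    have h := RingQuot.mkAlgHom_rel k (HRel.ap (k := k) (n := n) (p := p) (lam := 0) (mu := mu))
    rw [map_pow, map_mul, AlgHom.commutes, map_zero, zero_mul] at h
    exact h
  have rel_bp : (Hb k n p 0 mu) ^ p
      = algebraMap k (HAlg k n p 0 mu) mu * (1 - (Hg k n p 0 mu) ^ p) := by
    have h := RingQuot.mkAlgHom_rel k (HRel.bp (k := k) (n := n) (p := p) (lam := 0) (mu := mu))
    rw [map_pow, map_mul, AlgHom.commutes, map_sub, map_one, map_pow] at h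
    exact h
  have rel_ba : Hb k n p 0 mu * Ha k n p 0 mu
      = Ha k n p 0 mu * Hb k n p 0 mu
        + algebraMap k (HAlg k n p 0 mu) (1 / 2) * (Ha k n p 0 mu) ^ 2 := by
    have h := RingQuot.mkAlgHom_rel k (HRel.ba (k := k) (n := n) (p := p) (lam := 0) (mu := mu))
    rw [map_mul, map_add, map_mul, map_mul, AlgHom.commutes, map_pow] at h
    exact h
  -- Step 1: `a` acts as zero.
  have hA0 : A = 0 := by
    have hcen : Ha k n p 0 mu * (algebraMap k (HAlg k n p 0 mu) (1 / 2) * Ha k n p 0 mu)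
        = algebraMap k (HAlg k n p 0 mu) (1 / 2) * (Ha k n p 0 mu) ^ 2 := by
      rw [← mul_assoc, ← Algebra.commutes (1/2 : k), mul_assoc, ← sq]
    have hrange := Hsub_dichotomy hM (LinearMap.range A)
      (fun m hm => by
        obtain ⟨x, rfl⟩ := hm
        exact ⟨Hg k n p 0 mu • x, by
          show Ha k n p 0 mu • (Hg k n p 0 mu • x) = Hg k n p 0 mu • (Ha k n p 0 mu • x)
          rw [← mul_smul, ← mul_smul, rel_ag]⟩)
      (fun m hm => by
        obtain ⟨x, rfl⟩ := hm
        exact ⟨Ha k n p 0 mu • x, rfl⟩)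
      (fun m hm => by
        obtain ⟨x, rfl⟩ := hm
        refine ⟨(Hb k n p 0 mu
          + algebraMap k (HAlg k n p 0 mu) (1 / 2) * Ha k n p 0 mu) • x, ?_⟩
        show Ha k n p 0 mu • ((Hb k n p 0 mu
          + algebraMap k (HAlg k n p 0 mu) (1 / 2) * Ha k n p 0 mu) • x)
          = Hb k n p 0 mu • (Ha k n p 0 mu • x)
        rw [← mul_smul, ← mul_smul]
        congr 1
        rw [mul_add, hcen, ← rel_ba])
    rcases hrange with h | h
    · ext m
      have : A m ∈ LinearMap.range A := ⟨m, rfl⟩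
      rw [h] at this
      simpa using this
    · exfalso
      have hsurj : Function.Surjective A := LinearMap.range_eq_top.mp h
      have hsurjp : ∀ j : ℕ, Function.Surjective ⇑(A ^ j) := by
        intro j
        induction j with
        | zero => intro y; exact ⟨y, by simp⟩
        | succ j ih =>
          rw [pow_succ']
          exact fun y => by
            obtain ⟨z, hz⟩ := hsurj y
            obtain ⟨w, hw⟩ := ih z
            exact ⟨w, by rw [Module.End.mul_apply, hw, hz]⟩
      have hApz : (A : Module.End k M) ^ p = 0 := by rw [hA, ← map_pow, rel_ap, map_zero]
      obtain ⟨m, hm⟩ := exists_ne (0 : M)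
      obtain ⟨x, hx⟩ := hsurjp p m
      rw [hApz] at hx
      exact hm (by simpa using hx.symm)
  have hAsmul : ∀ m : M, Ha k n p 0 mu • m = 0 := by
    intro m
    have h : A m = 0 := by rw [hA0]; rfl
    exact h
  -- Step 2: `G` and `B` commute on `M`.
  have hBG : ∀ m : M, B (G m) = G (B m) := by
    intro m
    show Hb k n p 0 mu • (Hg k n p 0 mu • m) = Hg k n p 0 mu • (Hb k n p 0 mu • m)
    rw [← mul_smul, rel_bg, add_smul, mul_smul, mul_smul, hAsmul, smul_zero, zero_add]
  -- Step 3: find an eigenvector for `G`.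
  have hGn : G ^ n = 1 := by rw [hG, ← map_pow, rel_gn, map_one]
  have q_monic : (X ^ n - C (1 : k)).Monic := Polynomial.monic_X_pow_sub_C 1 hnpos.ne'
  have q_fact := (IsAlgClosed.splits _).eq_prod_roots_of_monic q_monic
  set l : List k := (X ^ n - C (1 : k)).roots.toList with hl
  have hprod : (l.map (fun α => G - α • 1)).prod = G ^ n - 1 := by
    have h1 : Polynomial.aeval G (X ^ n - C (1 : k)) = G ^ n - 1 := by
      simp
    rw [← h1]
    conv_rhs => rw [q_fact]
    have hroots : (X ^ n - C (1 : k)).roots = (l : Multiset k) :=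
      (Multiset.coe_toList _).symm
    rw [hroots, Multiset.map_coe, Multiset.prod_coe, map_list_prod (Polynomial.aeval G),
      List.map_map]
    congr 1
    apply List.map_congr_left
    intro a _
    simp [Module.algebraMap_end_eq_smul_id, Module.End.one_eq_id]
  obtain ⟨v, hv⟩ := exists_ne (0 : M)
  have hkill : (l.map (fun α => G - α • 1)).prod v = 0 := by
    rw [hprod, LinearMap.sub_apply, hGn]
    simp
  obtain ⟨α, w, hw0, hGw⟩ := exists_eigenvector G l v hv hkill
  -- eigenvalue facts
  have hGpow : ∀ (j : ℕ) (x : M), G x = α • x → (G ^ j) x = α ^ j • x := by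
    intro j
    induction j with
    | zero => intro x _; simp
    | succ j ih =>
      intro x hx
      rw [pow_succ, Module.End.mul_apply, hx, map_smul, ih x hx, smul_smul, ← pow_succ']
  -- B^p acts as the scalar c on α-eigenvectors of G
  set c : k := mu * (1 - α ^ p) with hc
  have hBpe : ∀ x : M, G x = α • x → (B ^ p) x = c • x := by
    intro x hx
    have hGpx : (Hg k n p 0 mu) ^ p • x = α ^ p • x := by
      have e1 : (Hg k n p 0 mu) ^ p • x = (G ^ p) x := by
        rw [hG, ← map_pow]; exact (Hrep_apply _ _).symm
      rw [e1, hGpow p x hx]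
    have e2 : (B ^ p) x = (Hb k n p 0 mu) ^ p • x := by
      rw [hB, ← map_pow]; exact Hrep_apply _ _
    rw [e2, rel_bp, mul_smul, algebraMap_smul, sub_smul, one_smul, hGpx, hc]
    rw [smul_sub, smul_smul, mul_one_sub, sub_smul]
  -- Step 4: pick a p-th root β of c.
  obtain ⟨β, hβ⟩ := IsAlgClosed.exists_pow_nat_eq c (n := p) hppos
  -- Step 5: N = B - β•1 is "nilpotent" on the eigenvector w
  set Nop : Module.End k M := B - β • 1 with hNop
  haveI : CharP (Module.End k M) p := by
    apply charP_of_injective_ringHom (f := (algebraMap k (Module.End k M)))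
    intro c1 c2 h
    obtain ⟨m, hm⟩ := exists_ne (0 : M)
    have h2 := LinearMap.congr_fun h m
    rw [Module.algebraMap_end_apply, Module.algebraMap_end_apply] at h2
    have h3 : (c1 - c2) • m = 0 := by rw [sub_smul, h2, sub_self]
    rcases smul_eq_zero.mp h3 with h4 | h4
    · exact sub_eq_zero.mp h4
    · exact absurd h4 hm
  have hNpow : Nop ^ p = B ^ p - (β ^ p) • 1 := by
    have hcomm : Commute B (β • (1 : Module.End k M)) :=
      Commute.smul_right (Commute.one_right B) β
    rw [hNop, sub_pow_char_of_commute p hcomm, _root_.smul_pow, one_pow]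
  have hGN : ∀ x : M, G (Nop x) = Nop (G x) := by
    intro x
    simp only [hNop, LinearMap.sub_apply, LinearMap.smul_apply, Module.End.one_apply,
      map_sub, map_smul, hBG]
  have hGeig : ∀ j : ℕ, G ((Nop ^ j) w) = α • (Nop ^ j) w := by
    intro j
    induction j with
    | zero => simpa using hGw
    | succ j ih =>
      rw [pow_succ', Module.End.mul_apply, hGN, ih, map_smul]
  have hNpw : (Nop ^ p) w = 0 := by
    rw [hNpow, LinearMap.sub_apply, hBpe w hGw, hβ]
    simp
  have hex : ∃ j, (Nop ^ j) w = 0 := ⟨p, hNpw⟩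
  set j₀ := Nat.find hex with hj₀
  have hj₀pos : 0 < j₀ := by
    rcases Nat.eq_zero_or_pos j₀ with h | h
    · exfalso
      have := Nat.find_spec hex
      rw [← hj₀, h] at this
      simp at this
      exact hw0 this
    · exact h
  set u := (Nop ^ (j₀ - 1)) w with hu
  have hu0 : u ≠ 0 := Nat.find_min hex (Nat.sub_lt hj₀pos one_pos)
  have hNu : Nop u = 0 := by
    have : Nop ((Nop ^ (j₀ - 1)) w) = (Nop ^ j₀) w := by
      rw [← Module.End.mul_apply, ← pow_succ']
      congr 2
      omega
    rw [hu, this]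
    exact Nat.find_spec hex
  have hBu : B u = β • u := by
    have h2 : B u - β • u = 0 := by
      have h3 := hNu
      rw [hNop] at h3
      simpa [LinearMap.sub_apply, LinearMap.smul_apply, Module.End.one_apply] using h3
    exact sub_eq_zero.mp h2
  have hGu : G u = α • u := hGeig (j₀ - 1)
  -- Step 7: the span of u is everything.
  have hsc : ∀ (h : HAlg k n p 0 mu) (d : k) (m : M), h • (d • m) = d • (h • m) := by
    intro h d m
    exact (rep h).map_smul d m
  have hspan := Hsub_dichotomy hM (Submodule.span k {u})
    (fun m hm => by
      obtain ⟨d, rfl⟩ := Submodule.mem_span_singleton.mp hm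
      rw [hsc]
      have hgu : Hg k n p 0 mu • u = α • u := hGu
      rw [hgu, smul_smul]
      exact Submodule.smul_mem _ _ (Submodule.mem_span_singleton_self u))
    (fun m hm => by
      obtain ⟨d, rfl⟩ := Submodule.mem_span_singleton.mp hm
      rw [hsc, hAsmul, smul_zero]
      exact Submodule.zero_mem _)
    (fun m hm => by
      obtain ⟨d, rfl⟩ := Submodule.mem_span_singleton.mp hm
      rw [hsc]
      have hbu : Hb k n p 0 mu • u = β • u := hBu
      rw [hbu, smul_smul]
      exact Submodule.smul_mem _ _ (Submodule.mem_span_singleton_self u))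
  rcases hspan with h | h
  · exfalso
    have hmem : u ∈ Submodule.span k {u} := Submodule.mem_span_singleton_self u
    rw [h] at hmem
    exact hu0 ((Submodule.mem_bot k).mp hmem)
  · refine rank_eq_one u hu0 (fun m => ?_)
    have : m ∈ Submodule.span k {u} := h ▸ Submodule.mem_top
    obtain ⟨d, hd⟩ := Submodule.mem_span_singleton.mp this
    exact ⟨d, hd⟩

/-- For `k` algebraically closed of characteristic `p > 2` and
`n = p^s·t` with `s ≥ 1`, `p ∤ t`, every simple left `H(0,μ)`-module is one-dimensional
over `k`. -/
theorem stmt11 {k : Type*} [Field k] [IsAlgClosed k] (p : ℕ) [CharP k p] (hp : 2 < p)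
    (s t : ℕ) (hs : 1 ≤ s) (hpt : ¬ p ∣ t) (mu : k)
    (M : Type) [AddCommGroup M] [Module k M]
    [Module (HAlg k (p ^ s * t) p 0 mu) M]
    [IsScalarTower k (HAlg k (p ^ s * t) p 0 mu) M]
    (hM : IsSimpleModule (HAlg k (p ^ s * t) p 0 mu) M) :
    Module.rank k M = 1 := by
  have htpos : 0 < t := by
    rcases Nat.eq_zero_or_pos t with h | h
    · exact absurd (h ▸ dvd_zero p) hpt
    · exact h
  have hppos : 0 < p := by omega
  exact stmt11_aux p hp (p ^ s * t) (Nat.mul_pos (Nat.pow_pos (n := s) hppos) htpos) mu M hM
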